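/- arXiv:2510.21051 — 2 statements merged into one kernel-verified Lean document; each statement's English description precedes it below -/
import Mathlib

section
/- Let n ∈ ℕ, and for i ∈ {M, C, G, F} let κ_i ∈ ℕ, θ̃_i ∈ ℝ^{κ_i}, and let Γ_i ∈ ℝ^{κ_i×κ_i} be invertible. Let r, a, b, ξ ∈ ℝⁿ and Ẽ ∈ ℝ, and define Q_M := aᵀ ⊗ Iₙ ∈ ℝ^{n×n²} and Q_C := bᵀ ⊗ Iₙ ∈ ℝ^{n×n²}. Let Φ′_M, Φ̇′_M, Φ′_C ∈ ℝ^{n²×κ_M or n²×κ_C} and Φ′_F, Φ′_G ∈ ℝ^{n×κ_F or n×κ_G} be matrices of compatible sizes. Define the (unprojected) weight update laws θ̂̇_M := Γ_M((Φ̇′_M)ᵀ(ξ ⊗ ξ)Ẽ − (Φ′_M)ᵀ Q_Mᵀ r), θ̂̇_C := Γ_C(−2(Φ′_C)ᵀ(ξ ⊗ ξ)Ẽ − (Φ′_C)ᵀ Q_Cᵀ r), θ̂̇_F := −Γ_F (Φ′_F)ᵀ r, θ̂̇_G := −Γ_G (Φ′_G)ᵀ r, and set θ̃̇_i := −θ̂̇_i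 for each i. Then all cross terms cancel: rᵀ(−Q_M Φ′_M θ̃_M − Q_C Φ′_C θ̃_C − Φ′_G θ̃_G − Φ′_F θ̃_F) + Ẽ·(ξ ⊗ ξ)ᵀ(Φ̇′_M θ̃_M − 2 Φ′_C θ̃_C) + Σ_{i∈{M,C,G,F}} θ̃_iᵀ Γ_i^{-1} θ̃̇_i = 0. -/
open Matrix
open scoped Kronecker

noncomputable section

/-- The matrix `aᵀ ⊗ Iₙ ∈ ℝ^{n × mn}` (Kronecker product of the row vector `aᵀ`
with the identity, with the trivial row index collapsed). -/
def rowKronId (n m : ℕ) (a : Fin m → ℝ) : Matrix (Fin n) (Fin m × Fin n) ℝ :=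
  ((Matrix.of fun (_ : Fin 1) j => a j) ⊗ₖ (1 : Matrix (Fin n) (Fin n) ℝ)).submatrix
    (fun i => ((0 : Fin 1), i)) id

/-- The Kronecker product `ξ ⊗ ξ ∈ ℝ^{n²}` of a vector with itself. -/
def kronVec {n : ℕ} (ξ : Fin n → ℝ) : Fin n × Fin n → ℝ :=
  fun p => ξ p.1 * ξ p.2

/-- Cancellation of all parameter-estimation cross terms in the Lyapunov derivative
under the (unprojected) SS-LbPINN weight update laws. -/
theorem cross_term_cancellation (n κM κC κG κF : ℕ)
    (θM : Fin κM → ℝ) (θC : Fin κC → ℝ) (θG : Fin κG → ℝ) (θF : Fin κF → ℝ)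
    (ΓM : Matrix (Fin κM) (Fin κM) ℝ) (ΓC : Matrix (Fin κC) (Fin κC) ℝ)
    (ΓG : Matrix (Fin κG) (Fin κG) ℝ) (ΓF : Matrix (Fin κF) (Fin κF) ℝ)
    (hΓM : IsUnit ΓM.det) (hΓC : IsUnit ΓC.det)
    (hΓG : IsUnit ΓG.det) (hΓF : IsUnit ΓF.det)
    (r a b ξ : Fin n → ℝ) (Etil : ℝ)
    (Φ'M dΦ'M : Matrix (Fin n × Fin n) (Fin κM) ℝ)
    (Φ'C : Matrix (Fin n × Fin n) (Fin κC) ℝ)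
    (Φ'F : Matrix (Fin n) (Fin κF) ℝ) (Φ'G : Matrix (Fin n) (Fin κG) ℝ)
    -- the (unprojected) weight update laws
    (dθhM : Fin κM → ℝ) (dθhC : Fin κC → ℝ) (dθhF : Fin κF → ℝ) (dθhG : Fin κG → ℝ)
    (hhM : dθhM = ΓM.mulVec (dΦ'Mᵀ.mulVec (Etil • kronVec ξ)
        - Φ'Mᵀ.mulVec ((rowKronId n n a)ᵀ.mulVec r)))
    (hhC : dθhC = ΓC.mulVec ((-(2 : ℝ)) • Φ'Cᵀ.mulVec (Etil • kronVec ξ)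
        - Φ'Cᵀ.mulVec ((rowKronId n n b)ᵀ.mulVec r)))
    (hhF : dθhF = -(ΓF.mulVec (Φ'Fᵀ.mulVec r)))
    (hhG : dθhG = -(ΓG.mulVec (Φ'Gᵀ.mulVec r)))
    -- the parameter-estimation-error derivatives
    (dθtM : Fin κM → ℝ) (dθtC : Fin κC → ℝ) (dθtF : Fin κF → ℝ) (dθtG : Fin κG → ℝ)
    (htM : dθtM = -dθhM) (htC : dθtC = -dθhC)
    (htF : dθtF = -dθhF) (htG : dθtG = -dθhG) :
    r ⬝ᵥ (-((rowKronId n n a).mulVec (Φ'M.mulVec θM))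
          - (rowKronId n n b).mulVec (Φ'C.mulVec θC)
          - Φ'G.mulVec θG - Φ'F.mulVec θF)
      + Etil * (kronVec ξ ⬝ᵥ (dΦ'M.mulVec θM - (2 : ℝ) • Φ'C.mulVec θC))
      + (θM ⬝ᵥ ΓM⁻¹.mulVec dθtM + θC ⬝ᵥ ΓC⁻¹.mulVec dθtC
          + θG ⬝ᵥ ΓG⁻¹.mulVec dθtG + θF ⬝ᵥ ΓF⁻¹.mulVec dθtF) = 0 := by
  subst htM htC htF htG hhM hhC hhF hhG
  simp only [Matrix.mulVec_neg, Matrix.mulVec_mulVec, ← Matrix.mul_assoc]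
  rw [Matrix.nonsing_inv_mul _ hΓM, Matrix.nonsing_inv_mul _ hΓC,
      Matrix.nonsing_inv_mul _ hΓG, Matrix.nonsing_inv_mul _ hΓF]
  set v := Etil • kronVec ξ
  simp only [Matrix.one_mulVec, Matrix.mulVec_sub, Matrix.mulVec_smul, dotProduct_sub, dotProduct_neg, dotProduct_smul, Matrix.dotProduct_mulVec, Matrix.vecMul_transpose, Matrix.mulVec_transpose, smul_eq_mul, dotProduct_smul]
  simp only [Matrix.one_mul, ← Matrix.transpose_mul, Matrix.vecMul_transpose, v, Matrix.smul_vecMul, dotProduct_smul, smul_eq_mul]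
  rw [dotProduct_comm ((rowKronId n n a * Φ'M) *ᵥ θM) r,
      dotProduct_comm ((rowKronId n n b * Φ'C) *ᵥ θC) r,
      dotProduct_comm (Φ'G *ᵥ θG) r, dotProduct_comm (Φ'F *ᵥ θF) r,
      dotProduct_comm θM, dotProduct_comm θC]
  simp only [Matrix.dotProduct_mulVec, smul_dotProduct, smul_eq_mul]
  ring
end
end

section
/- Let 0 < β₁ ≤ β₂, λ₁ > 0, λ₂ > 0, let P : [0, ∞) → [0, ∞) be nondecreasing, let ζ : [0, ∞) → ℝ^ψ be continuous, let z : [0, ∞) → ℝᵐ be continuous with ‖z(t)‖ ≤ ‖ζ(t)‖ for all t, and let V : [0, ∞) → ℝ be differentiable with β₁‖ζ(t)‖² ≤ V(t) ≤ β₂‖ζ(t)‖² and V′(t) ≤ −(λ₁ − P(‖z(t)‖))·‖z(t)‖² for all t ≥ 0. If λ₁ ≥ λ₂ + P(√(β₂/β₁)·‖ζ(0)‖), then for all t ≥ 0: V′(t) ≤ −λ₂‖z(t)‖², V is nonincreasing, and ‖ζ(t)‖ ≤ √(β₂/β₁)·‖ζ(0)‖. -/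
set_option maxHeartbeats 1000000 in
/-- Semi-global gain-condition argument: if `β₁‖ζ‖² ≤ V ≤ β₂‖ζ‖²`,
`V′ ≤ −(λ₁ − P(‖z‖))‖z‖²` with `‖z(t)‖ ≤ ‖ζ(t)‖`, and
`λ₁ ≥ λ₂ + P(√(β₂/β₁)‖ζ(0)‖)`, then `V′ ≤ −λ₂‖z‖²`, `V` is nonincreasing on `[0,∞)`,
and `‖ζ(t)‖ ≤ √(β₂/β₁)‖ζ(0)‖` for all `t ≥ 0`. -/
theorem semiglobal_gain_condition (ψ m : ℕ) (β₁ β₂ lam₁ lam₂ : ℝ)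
    (hβ₁ : 0 < β₁) (hβ₁₂ : β₁ ≤ β₂) (hlam₁ : 0 < lam₁) (hlam₂ : 0 < lam₂)
    (P : ℝ → ℝ) (hPmono : MonotoneOn P (Set.Ici 0))
    (hPnonneg : ∀ s ∈ Set.Ici (0 : ℝ), 0 ≤ P s)
    (ζ : ℝ → EuclideanSpace ℝ (Fin ψ)) (hζ : Continuous ζ)
    (z : ℝ → EuclideanSpace ℝ (Fin m)) (hz : Continuous z)
    (hzζ : ∀ t, 0 ≤ t → ‖z t‖ ≤ ‖ζ t‖)
    (V V' : ℝ → ℝ) (hV : ∀ t, 0 ≤ t → HasDerivAt V (V' t) t)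
    (hsandwich : ∀ t, 0 ≤ t → β₁ * ‖ζ t‖ ^ 2 ≤ V t ∧ V t ≤ β₂ * ‖ζ t‖ ^ 2)
    (hV' : ∀ t, 0 ≤ t → V' t ≤ -(lam₁ - P ‖z t‖) * ‖z t‖ ^ 2)
    (hgain : lam₂ + P (Real.sqrt (β₂ / β₁) * ‖ζ 0‖) ≤ lam₁) :
    (∀ t, 0 ≤ t → V' t ≤ -lam₂ * ‖z t‖ ^ 2) ∧
      AntitoneOn V (Set.Ici 0) ∧
      ∀ t, 0 ≤ t → ‖ζ t‖ ≤ Real.sqrt (β₂ / β₁) * ‖ζ 0‖ := by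
  have hsq : (Real.sqrt (β₂ / β₁)) ^ 2 = β₂ / β₁ := Real.sq_sqrt (div_nonneg (by linarith) hβ₁.le)
  set B := Real.sqrt (β₂ / β₁) * ‖ζ 0‖ with hBdef
  have hBnn : 0 ≤ B := mul_nonneg (Real.sqrt_nonneg _) (norm_nonneg _)
  have hV0 : V 0 ≤ β₂ * ‖ζ 0‖ ^ 2 := (hsandwich 0 le_rfl).2
  have hVnn : ∀ t, 0 ≤ t → 0 ≤ V t := fun t ht =>
    le_trans (by positivity) (hsandwich t ht).1
  have hkey : ∀ t, 0 ≤ t → V t ≤ V 0 → ‖ζ t‖ ≤ B := by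
    intro t ht h
    have h1 : β₁ * ‖ζ t‖ ^ 2 ≤ β₂ * ‖ζ 0‖ ^ 2 := le_trans (hsandwich t ht).1 (le_trans h hV0)
    have h2 : ‖ζ t‖ ^ 2 ≤ B ^ 2 := by
      rw [hBdef, mul_pow, hsq, div_mul_eq_mul_div, le_div_iff₀ hβ₁]
      nlinarith [norm_nonneg (ζ t)]
    have h3 := Real.sqrt_le_sqrt h2
    rwa [Real.sqrt_sq (norm_nonneg _), Real.sqrt_sq hBnn] at h3
  have hPB : P B ≤ lam₁ - lam₂ := by linarith
  have hderiv_small : ∀ s, 0 ≤ s → ‖z s‖ ≤ B → V' s ≤ -lam₂ * ‖z s‖ ^ 2 := by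
    intro s hs hzs
    have hPz : P ‖z s‖ ≤ P B :=
      hPmono (Set.mem_Ici.mpr (norm_nonneg _)) (Set.mem_Ici.mpr hBnn) hzs
    calc V' s ≤ -(lam₁ - P ‖z s‖) * ‖z s‖ ^ 2 := hV' s hs
      _ ≤ -lam₂ * ‖z s‖ ^ 2 := by
        nlinarith [mul_nonneg (show (0:ℝ) ≤ lam₁ - P ‖z s‖ - lam₂ by linarith) (sq_nonneg ‖z s‖)]
  have hanti : ∀ a b : ℝ, 0 ≤ a → (∀ s ∈ Set.Icc a b, V' s ≤ 0) →
      AntitoneOn V (Set.Icc a b) := by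
    intro a b ha hs
    apply antitoneOn_of_deriv_nonpos (convex_Icc a b)
    · intro x hx
      exact ((hV x (le_trans ha hx.1)).continuousAt).continuousWithinAt
    · intro x hx
      rw [interior_Icc] at hx
      exact ((hV x (le_trans ha hx.1.le)).differentiableAt).differentiableWithinAt
    · intro x hx
      rw [interior_Icc] at hx
      rw [(hV x (le_trans ha hx.1.le)).deriv]
      exact hs x ⟨hx.1.le, hx.2.le⟩
  have hmain : ∀ t, 0 ≤ t → V t ≤ V 0 := by
    by_contra hcon
    push_neg at hcon
    obtain ⟨t₁, ht₁, hVt₁⟩ := hcon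
    set S := {t : ℝ | 0 ≤ t ∧ V 0 < V t} with hSdef
    have hSne : S.Nonempty := ⟨t₁, ht₁, hVt₁⟩
    have hSbdd : BddBelow S := ⟨0, fun x hx => hx.1⟩
    set T := sInf S with hTdef
    have hT0 : 0 ≤ T := le_csInf hSne fun x hx => hx.1
    have hTle : ∀ s, 0 ≤ s → s < T → V s ≤ V 0 := by
      intro s hs hsT
      by_contra h
      push_neg at h
      exact absurd (csInf_le hSbdd ⟨hs, h⟩) (not_le.mpr hsT)
    have hVT : V T ≤ V 0 := by
      rcases eq_or_lt_of_le hT0 with h0 | h0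
      · rw [← h0]
      · haveI : (nhdsWithin T (Set.Ico 0 T)).NeBot := by
          apply mem_closure_iff_nhdsWithin_neBot.mp
          rw [closure_Ico h0.ne]
          exact ⟨h0.le, le_rfl⟩
        have hc : Filter.Tendsto V (nhdsWithin T (Set.Ico 0 T)) (nhds (V T)) :=
          ((hV T hT0).continuousAt).continuousWithinAt.tendsto
        refine le_of_tendsto hc ?_
        filter_upwards [self_mem_nhdsWithin] with s hs
        exact hTle s hs.1 hs.2
    have hζT : ‖ζ T‖ ≤ B := hkey T hT0 hVT
    have hzT : ‖z T‖ ≤ B := le_trans (hzζ T hT0) hζT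
    have hinf : ∀ δ : ℝ, 0 < δ → ∃ x, x ∈ S ∧ T ≤ x ∧ x < T + δ := by
      intro δ hδ
      obtain ⟨x, hxS, hx⟩ := (csInf_lt_iff hSbdd hSne).mp (by linarith : sInf S < T + δ)
      exact ⟨x, hxS, csInf_le hSbdd hxS, hx⟩
    have hdone : ¬ ∃ δ, 0 < δ ∧ ∀ s ∈ Set.Icc T (T + δ), V s ≤ V 0 := by
      rintro ⟨δ, hδ, hall⟩
      obtain ⟨x, hxS, hxT, hxδ⟩ := hinf δ hδ
      exact absurd (hall x ⟨hxT, hxδ.le⟩) (not_le.mpr hxS.2)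
    apply hdone
    rcases lt_or_eq_of_le hzT with hlt | heq
    · -- ‖z T‖ < B : derivative stays nonpositive nearby
      have hopen : IsOpen {s : ℝ | ‖z s‖ < B} := isOpen_lt hz.norm continuous_const
      obtain ⟨ε, hε, hball⟩ := Metric.isOpen_iff.mp hopen T hlt
      refine ⟨ε / 2, by linarith, ?_⟩
      have hd0 : ∀ s ∈ Set.Icc T (T + ε / 2), V' s ≤ 0 := by
        intro s hs
        have hsball : s ∈ Metric.ball T ε := by
          rw [Metric.mem_ball, Real.dist_eq, abs_sub_lt_iff]
          constructor
          · linarith [hs.2]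
          · linarith [hs.1]
        have hzs : ‖z s‖ < B := hball hsball
        have := hderiv_small s (le_trans hT0 hs.1) hzs.le
        nlinarith [mul_nonneg hlam₂.le (sq_nonneg ‖z s‖)]
      intro s hs
      exact le_trans
        (hanti T (T + ε / 2) hT0 hd0 ⟨le_refl T, by linarith⟩ hs hs.1) hVT
    · rcases eq_or_lt_of_le hBnn with hB0 | hBpos
      · -- B = 0 : Grönwall argument
        have hζ0 : ‖ζ T‖ = 0 := le_antisymm (by rw [← hB0] at hζT; exact hζT) (norm_nonneg _)
        have hVTz : V T = 0 := le_antisymm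
          (by have := (hsandwich T hT0).2; rw [hζ0] at this; simpa using this)
          (hVnn T hT0)
        have hV00 : V 0 = 0 := by
          have hz0 : ‖ζ 0‖ = 0 := by
            have hs : (0:ℝ) < Real.sqrt (β₂ / β₁) := Real.sqrt_pos.mpr (div_pos (by linarith) hβ₁)
            by_contra hne
            have : 0 < ‖ζ 0‖ := lt_of_le_of_ne (norm_nonneg _) (Ne.symm hne)
            have : 0 < B := mul_pos hs this
            linarith [hB0]
          refine le_antisymm ?_ (hVnn 0 le_rfl)
          have := hV0; rw [hz0] at this; simpa using this
        set C := P 1 / β₁ with hCdef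
        have hCnn : 0 ≤ C := div_nonneg (hPnonneg 1 (Set.mem_Ici.mpr zero_le_one)) hβ₁.le
        have hzT1 : ‖z T‖ < 1 := by rw [heq, ← hB0]; exact one_pos
        have hopen : IsOpen {s : ℝ | ‖z s‖ < 1} := isOpen_lt hz.norm continuous_const
        obtain ⟨ε, hε, hball⟩ := Metric.isOpen_iff.mp hopen T hzT1
        refine ⟨ε / 2, by linarith, ?_⟩
        -- derivative bound V' ≤ C * V on the interval
        have hVC : ∀ s ∈ Set.Icc T (T + ε / 2), V' s ≤ C * V s := by
          intro s hs
          have hs0 : 0 ≤ s := le_trans hT0 hs.1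
          have hsball : s ∈ Metric.ball T ε := by
            rw [Metric.mem_ball, Real.dist_eq, abs_sub_lt_iff]
            constructor
            · linarith [hs.2]
            · linarith [hs.1]
          have hzs1 : ‖z s‖ ≤ 1 := (hball hsball).le
          have hPz : P ‖z s‖ ≤ P 1 :=
            hPmono (Set.mem_Ici.mpr (norm_nonneg _)) (Set.mem_Ici.mpr zero_le_one) hzs1
          have hP1nn : 0 ≤ P 1 := hPnonneg 1 (Set.mem_Ici.mpr zero_le_one)
          have hz2 : β₁ * ‖z s‖ ^ 2 ≤ V s :=
            le_trans (mul_le_mul_of_nonneg_left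
              (pow_le_pow_left₀ (norm_nonneg _) (hzζ s hs0) 2) hβ₁.le) (hsandwich s hs0).1
          have h1 : V' s ≤ P ‖z s‖ * ‖z s‖ ^ 2 := by
            have := hV' s hs0
            nlinarith [mul_nonneg hlam₁.le (sq_nonneg ‖z s‖)]
          have h2 : P ‖z s‖ * ‖z s‖ ^ 2 ≤ P 1 * ‖z s‖ ^ 2 :=
            mul_le_mul_of_nonneg_right hPz (sq_nonneg _)
          have h3 : P 1 * (β₁ * ‖z s‖ ^ 2) ≤ P 1 * V s :=
            mul_le_mul_of_nonneg_left hz2 hP1nn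
          have hCV : C * V s = P 1 * V s / β₁ := by rw [hCdef]; ring
          rw [hCV, le_div_iff₀ hβ₁]
          linarith [mul_le_mul_of_nonneg_right (h1.trans h2) hβ₁.le]
        -- the weighted function W is nonincreasing
        set W : ℝ → ℝ := fun s => V s * Real.exp (-C * s) with hWdef
        have hWanti : AntitoneOn W (Set.Icc T (T + ε / 2)) := by
          have hWderiv : ∀ s, 0 ≤ s →
              HasDerivAt W (V' s * Real.exp (-C * s) + V s * (Real.exp (-C * s) * (-C * 1))) s := by
            intro s hs0
            exact (hV s hs0).mul (((hasDerivAt_id s).const_mul (-C)).exp)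
          apply antitoneOn_of_deriv_nonpos (convex_Icc _ _)
          · intro x hx
            exact ((hWderiv x (le_trans hT0 hx.1)).continuousAt).continuousWithinAt
          · intro x hx
            rw [interior_Icc] at hx
            exact ((hWderiv x (le_trans hT0 hx.1.le)).differentiableAt).differentiableWithinAt
          · intro x hx
            rw [interior_Icc] at hx
            rw [(hWderiv x (le_trans hT0 hx.1.le)).deriv]
            have hVC' := hVC x ⟨hx.1.le, hx.2.le⟩
            have hexp : 0 < Real.exp (-C * x) := Real.exp_pos _
            nlinarith [mul_le_mul_of_nonneg_right (sub_nonpos.mpr hVC') hexp.le]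
        intro s hs
        have hWs : W s ≤ W T :=
          hWanti ⟨le_refl T, by linarith⟩ hs hs.1
        have hWT : W T = 0 := by rw [hWdef]; simp [hVTz]
        have hVs0 : V s ≤ 0 := by
          rw [hWT, hWdef] at hWs
          have hWs' : V s * Real.exp (-C * s) ≤ 0 := hWs
          have hexp : 0 < Real.exp (-C * s) := Real.exp_pos _
          by_contra hpos
          push_neg at hpos
          nlinarith [mul_pos hpos hexp]
        rw [hV00]; exact hVs0
      · -- B > 0 : strictly negative derivative at T
        have hVT' : V' T < 0 := by
          have h := hderiv_small T hT0 heq.le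
          rw [heq] at h
          nlinarith [pow_pos hBpos 2, mul_pos hlam₂ (pow_pos hBpos 2)]
        have hslope := hasDerivWithinAt_iff_tendsto_slope.mp
          ((hV T hT0).hasDerivWithinAt (s := Set.Ioi T))
        have hset : Set.Ioi T \ {T} = Set.Ioi T :=
          Set.diff_singleton_eq_self (by simp)
        rw [hset] at hslope
        have hev : ∀ᶠ s in nhdsWithin T (Set.Ioi T), slope V T s < 0 :=
          hslope.eventually_lt_const hVT'
        obtain ⟨b, hb, hsub⟩ := mem_nhdsGT_iff_exists_Ioc_subset.mp hev
        have hbT : T < b := hb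
        refine ⟨b - T, by linarith, ?_⟩
        intro s hs
        rcases eq_or_lt_of_le hs.1 with h1 | h1
        · rw [← h1]; exact hVT
        · have hsl : slope V T s < 0 := hsub ⟨h1, by linarith [hs.2]⟩
          rw [slope_def_field] at hsl
          have hst : 0 < s - T := by linarith
          have : V s - V T < 0 := by
            by_contra hge
            push_neg at hge
            exact absurd hsl (not_lt.mpr (div_nonneg hge hst.le))
          linarith
  have hζB : ∀ t, 0 ≤ t → ‖ζ t‖ ≤ B := fun t ht => hkey t ht (hmain t ht)
  have h1 : ∀ t, 0 ≤ t → V' t ≤ -lam₂ * ‖z t‖ ^ 2 := fun t ht =>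
    hderiv_small t ht (le_trans (hzζ t ht) (hζB t ht))
  refine ⟨h1, ?_, hζB⟩
  apply antitoneOn_of_deriv_nonpos (convex_Ici 0)
  · intro x hx
    exact ((hV x hx).continuousAt).continuousWithinAt
  · intro x hx
    rw [interior_Ici] at hx
    exact ((hV x hx.le).differentiableAt).differentiableWithinAt
  · intro x hx
    rw [interior_Ici] at hx
    rw [(hV x hx.le).deriv]
    have := h1 x hx.le
    nlinarith [mul_nonneg hlam₂.le (sq_nonneg ‖z x‖)]
end
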